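/- For every p > 1, the constant c_p = (1/(2π)) · (Γ((p+1)/(p-1))/Γ(2p/(p-1))) · (Γ(2p/(p-1))/Γ((5p-1)/(2p-2)))^{(p+3)/(p-1)} · (Γ((3p+1)/(2p-2))/Γ((p+1)/(p-1)))^{(3p+1)/(p-1)} satisfies c_p ≥ 1/(2πe). -/

import Mathlib

open Real

noncomputable section

/-- The sharp constant `c_p` from Proposition 2. -/
def cP (p : ℝ) : ℝ :=
  (1 / (2 * Real.pi)) * (Real.Gamma ((p + 1) / (p - 1)) / Real.Gamma (2 * p / (p - 1))) *
    (Real.Gamma (2 * p / (p - 1)) / Real.Gamma ((5 * p - 1) / (2 * p - 2))) ^ ((p + 3) / (p - 1)) *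
    (Real.Gamma ((3 * p + 1) / (2 * p - 2)) / Real.Gamma ((p + 1) / (p - 1))) ^ ((3 * p + 1) / (p - 1))

open Filter

/-! ### Auxiliary lemmas -/

private lemma gamma_midpoint_sq_le {a b : ℝ} (ha : 0 < a) (hb : 0 < b) :
    Real.Gamma ((a+b)/2) ^ 2 ≤ Real.Gamma a * Real.Gamma b := by
  have h := Real.convexOn_log_Gamma.2 (Set.mem_Ioi.2 ha) (Set.mem_Ioi.2 hb)
    (by norm_num : (0:ℝ) ≤ 1/2) (by norm_num : (0:ℝ) ≤ 1/2) (by norm_num)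
  simp only [Function.comp, smul_eq_mul] at h
  have habm : (1/2:ℝ)*a + (1/2:ℝ)*b = (a+b)/2 := by ring
  rw [habm] at h
  have h2 : 2 * Real.log (Real.Gamma ((a+b)/2)) ≤
      Real.log (Real.Gamma a) + Real.log (Real.Gamma b) := by linarith
  have hga := Real.Gamma_pos_of_pos ha
  have hgb := Real.Gamma_pos_of_pos hb
  have hgm := Real.Gamma_pos_of_pos (by positivity : (0:ℝ) < (a+b)/2)
  calc Real.Gamma ((a+b)/2) ^ 2 = Real.exp (2 * Real.log (Real.Gamma ((a+b)/2))) := by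
        rw [mul_comm, Real.exp_mul, Real.exp_log hgm]; norm_num
    _ ≤ Real.exp (Real.log (Real.Gamma a) + Real.log (Real.Gamma b)) := Real.exp_le_exp.2 h2
    _ = Real.Gamma a * Real.Gamma b := by rw [Real.exp_add, Real.exp_log hga, Real.exp_log hgb]

private lemma conv_lower {y : ℝ} (hy : 0 < y) :
    y * Real.Gamma (y+1/2) ^ 2 ≤ Real.Gamma (y+1) ^ 2 := by
  have h := gamma_midpoint_sq_le hy (by linarith : (0:ℝ) < y+1)
  have hmid : (y + (y+1))/2 = y + 1/2 := by ring
  rw [hmid] at h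
  have hG1 : Real.Gamma (y+1) = y * Real.Gamma y := Real.Gamma_add_one (ne_of_gt hy)
  have hgy := Real.Gamma_pos_of_pos hy
  calc y * Real.Gamma (y+1/2)^2 ≤ y * (Real.Gamma y * Real.Gamma (y+1)) := by
        nlinarith [Real.Gamma_pos_of_pos (by linarith : (0:ℝ) < y+1)]
    _ = Real.Gamma (y+1)^2 := by rw [hG1]; ring

private lemma conv_upper {y : ℝ} (hy : 0 < y) :
    Real.Gamma (y+1) ^ 2 ≤ (y+1/2) * Real.Gamma (y+1/2) ^ 2 := by
  have h := gamma_midpoint_sq_le (by linarith : (0:ℝ) < y+1/2) (by linarith : (0:ℝ) < y+3/2)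
  have hmid : ((y+1/2) + (y+3/2))/2 = y + 1 := by ring
  rw [hmid] at h
  have hG : Real.Gamma (y+3/2) = (y+1/2) * Real.Gamma (y+1/2) := by
    have := Real.Gamma_add_one (ne_of_gt (by linarith : (0:ℝ) < y+1/2))
    rw [show y+1/2+1 = y+3/2 by ring] at this
    exact this
  calc Real.Gamma (y+1)^2 ≤ Real.Gamma (y+1/2) * Real.Gamma (y+3/2) := h
    _ = (y+1/2) * Real.Gamma (y+1/2)^2 := by rw [hG]; ring

/-- auxiliary quotient `ψ(s) = Γ(s+1)² / ((s+1/4) Γ(s+1/2)²)` -/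
private def psiQ (s : ℝ) : ℝ :=
  Real.Gamma (s+1)^2 / ((s+1/4) * Real.Gamma (s+1/2)^2)

private lemma psiQ_succ_le {s : ℝ} (hs : 0 < s) : psiQ (s+1) ≤ psiQ s := by
  unfold psiQ
  have hg1 := Real.Gamma_pos_of_pos (by linarith : (0:ℝ) < s+1)
  have hg2 := Real.Gamma_pos_of_pos (by linarith : (0:ℝ) < s+1/2)
  have e1 : Real.Gamma (s+1+1) = (s+1) * Real.Gamma (s+1) :=
    Real.Gamma_add_one (by positivity)
  have e2 : Real.Gamma (s+1+1/2) = (s+1/2) * Real.Gamma (s+1/2) := by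
    have := Real.Gamma_add_one (ne_of_gt (by linarith : (0:ℝ) < s+1/2))
    rw [show s+1/2+1 = s+1+1/2 by ring] at this; exact this
  rw [e1, e2, div_le_div_iff₀ (by positivity) (by positivity)]
  ring_nf
  nlinarith [sq_nonneg (Real.Gamma (s+1) * Real.Gamma (s+1/2)), mul_pos hg1 hg2,
    sq_nonneg (Real.Gamma (s+1) * Real.Gamma (s+1/2) * s)]

private lemma psiQ_lower (n : ℕ) : ∀ s : ℝ, 0 < s → (s+n)/(s+n+1/4) ≤ psiQ s := by
  induction n with
  | zero =>
    intro s hs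
    have h := conv_lower hs
    have hg2 := Real.Gamma_pos_of_pos (by linarith : (0:ℝ) < s+1/2)
    simp only [Nat.cast_zero, add_zero]
    rw [psiQ, div_le_div_iff₀ (by positivity) (by positivity)]
    nlinarith
  | succ n ih =>
    intro s hs
    have h1 := ih (s+1) (by linarith)
    have h2 := psiQ_succ_le hs
    have : (s+1+n)/(s+1+n+1/4) = (s+(n+1:ℕ))/(s+(n+1:ℕ)+1/4) := by push_cast; ring_nf
    rw [this] at h1
    linarith

private lemma tendsto_ratio_aux {c d : ℝ} (hd : 0 < d) :
    Tendsto (fun n : ℕ => (c+n)/(d+n)) atTop (nhds 1) := by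
  have h1 : Tendsto (fun n : ℕ => (d+n)) atTop atTop :=
    tendsto_atTop_add_const_left _ _ tendsto_natCast_atTop_atTop
  have h2 : Tendsto (fun n : ℕ => 1 - (d-c)/(d+n)) atTop (nhds 1) := by
    have := (tendsto_const_nhds (x := (d-c:ℝ)) (f := atTop (α := ℕ))).div_atTop h1
    simpa using (tendsto_const_nhds (x := (1:ℝ)) (f := atTop (α := ℕ))).sub this
  refine h2.congr' ?_
  filter_upwards with n
  have hpos : (0:ℝ) < d+n := by positivity
  field_simp
  ring

private lemma one_le_psiQ {s : ℝ} (hs : 0 < s) : 1 ≤ psiQ s := by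
  have hlim : Tendsto (fun n : ℕ => (s+n)/(s+n+1/4)) atTop (nhds 1) := by
    have := tendsto_ratio_aux (c := s) (by linarith : (0:ℝ) < s+1/4)
    refine this.congr fun n => ?_
    ring_nf
  exact le_of_tendsto' hlim (fun n => psiQ_lower n s hs)

/-- Lower Gautschi-type bound: `(s+1/4) Γ(s+1/2)² ≤ Γ(s+1)²` -/
private lemma gamma_ratio_lower {s : ℝ} (hs : 0 < s) :
    (s+1/4) * Real.Gamma (s+1/2)^2 ≤ Real.Gamma (s+1)^2 := by
  have h := one_le_psiQ hs
  have hg2 := Real.Gamma_pos_of_pos (by linarith : (0:ℝ) < s+1/2)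
  rw [psiQ, le_div_iff₀ (by positivity)] at h
  linarith

/-- the log-quotient `L(s) = log ψ(s)` -/
private def Lf (s : ℝ) : ℝ :=
  2 * Real.log (Real.Gamma (s+1)) - 2 * Real.log (Real.Gamma (s+1/2)) - Real.log (s+1/4)

private lemma Lf_step {s : ℝ} (hs : 0 < s) :
    Lf s ≤ Lf (s+1) + 1/(16*((s+1)^2*(s+1/4))) := by
  have hg1 := Real.Gamma_pos_of_pos (by linarith : (0:ℝ) < s+1)
  have hg2 := Real.Gamma_pos_of_pos (by linarith : (0:ℝ) < s+1/2)
  have e1 : Real.Gamma (s+1+1) = (s+1) * Real.Gamma (s+1) :=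
    Real.Gamma_add_one (by positivity)
  have e2 : Real.Gamma (s+1+1/2) = (s+1/2) * Real.Gamma (s+1/2) := by
    have := Real.Gamma_add_one (ne_of_gt (by linarith : (0:ℝ) < s+1/2))
    rw [show s+1/2+1 = s+1+1/2 by ring] at this; exact this
  have hD : (0:ℝ) < (s+1/2)^2*(s+5/4) := by positivity
  have hN : (0:ℝ) < (s+1)^2*(s+1/4) := by positivity
  have hlog : Real.log ((s+1/2)^2*(s+5/4)) - Real.log ((s+1)^2*(s+1/4))
      ≤ 1/(16*((s+1)^2*(s+1/4))) := by
    rw [← Real.log_div (ne_of_gt hD) (ne_of_gt hN)]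
    have h1 := Real.log_le_sub_one_of_pos (div_pos hD hN)
    have h2 : (s+1/2)^2*(s+5/4) / ((s+1)^2*(s+1/4)) - 1 = 1/(16*((s+1)^2*(s+1/4))) := by
      field_simp; ring
    linarith
  have expand : Lf s - Lf (s+1) =
      Real.log ((s+1/2)^2*(s+5/4)) - Real.log ((s+1)^2*(s+1/4)) := by
    unfold Lf
    rw [e1, e2, Real.log_mul (by positivity) (ne_of_gt hg1),
      Real.log_mul (by positivity) (ne_of_gt hg2),
      Real.log_mul (by positivity) (by positivity : (s+5/4:ℝ) ≠ 0),
      Real.log_mul (by positivity) (by positivity : (s+1/4:ℝ) ≠ 0),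
      Real.log_pow, Real.log_pow]
    push_cast; ring
  linarith

private lemma Lf_upper {y : ℝ} (hy : 0 < y) :
    Lf y ≤ Real.log (y+1/2) - Real.log (y+1/4) := by
  have h := conv_upper hy
  have hg1 := Real.Gamma_pos_of_pos (by linarith : (0:ℝ) < y+1)
  have hg2 := Real.Gamma_pos_of_pos (by linarith : (0:ℝ) < y+1/2)
  have hlog := Real.log_le_log (by positivity) h
  rw [Real.log_mul (by positivity) (by positivity), Real.log_pow, Real.log_pow] at hlog
  unfold Lf
  push_cast at hlog ⊢
  linarith

private lemma Lf_tele (n : ℕ) : ∀ s : ℝ, 0 < s →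
    Lf s ≤ Lf (s+n) + (1/(16*(s+1/4))) * (1/(s+1/4) - 1/(s+n+1/4)) := by
  induction n with
  | zero => intro s hs; simp
  | succ n ih =>
    intro s hs
    have ih1 := ih s hs
    have hstep := Lf_step (by positivity : (0:ℝ) < s+n)
    have key : 1/(16*((s+n+1)^2*(s+n+1/4)))
        ≤ (1/(16*(s+1/4))) * (1/(s+n+1/4) - 1/(s+n+5/4)) := by
      have h1 : (1/(s+n+1/4) - 1/(s+n+5/4)) = 1/((s+n+1/4)*(s+n+5/4)) := by
        field_simp; ring
      rw [h1, div_mul_div_comm, one_mul, div_le_div_iff₀ (by positivity) (by positivity)]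
      nlinarith [sq_nonneg (n:ℝ)]
    have h1e : s + ((n:ℝ)+1) = s + n + 1 := by ring
    have h2e : s + (n:ℝ) + 1 + 1/4 = s + n + 5/4 := by ring
    have cast2 : (((n+1):ℕ):ℝ) = (n:ℝ)+1 := by push_cast; ring
    rw [cast2, h1e, h2e]
    linarith

private lemma Lf_le {s : ℝ} (hs : 0 < s) : Lf s ≤ 1/(16*(s+1/4)^2) := by
  have hbound : ∀ n : ℕ, Lf s ≤ Real.log ((s+n+1/2)/(s+n+1/4))
      + (1/(16*(s+1/4))) * (1/(s+1/4) - 1/(s+n+1/4)) := by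
    intro n
    have h1 := Lf_tele n s hs
    have h2 := Lf_upper (by positivity : (0:ℝ) < s+n)
    rw [Real.log_div (by positivity) (by positivity)]
    linarith
  have hlim : Tendsto (fun n : ℕ => Real.log ((s+n+1/2)/(s+n+1/4))
      + (1/(16*(s+1/4))) * (1/(s+1/4) - 1/(s+n+1/4))) atTop
      (nhds (1/(16*(s+1/4)^2))) := by
    have hratio : Tendsto (fun n : ℕ => (s+n+1/2)/(s+n+1/4)) atTop (nhds 1) := by
      have := tendsto_ratio_aux (c := s+1/2) (by linarith : (0:ℝ) < s+1/4)
      refine this.congr fun n => ?_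
      ring_nf
    have hlog : Tendsto (fun n : ℕ => Real.log ((s+n+1/2)/(s+n+1/4))) atTop (nhds 0) := by
      have hc := (Real.continuousAt_log (one_ne_zero)).tendsto
      have := hc.comp hratio
      simpa [Function.comp_def] using this
    have hden : Tendsto (fun n : ℕ => (s+n+1/4)) atTop atTop := by
      apply tendsto_atTop_add_const_right
      exact tendsto_atTop_add_const_left _ _ tendsto_natCast_atTop_atTop
    have hinv : Tendsto (fun n : ℕ => 1/(s+n+1/4)) atTop (nhds 0) :=
      (tendsto_const_nhds (x := (1:ℝ))).div_atTop hden
    have hsecond : Tendsto (fun n : ℕ => (1/(16*(s+1/4))) * (1/(s+1/4) - 1/(s+n+1/4)))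
        atTop (nhds ((1/(16*(s+1/4))) * (1/(s+1/4) - 0))) :=
      ((tendsto_const_nhds).sub hinv).const_mul _
    have := hlog.add hsecond
    simp only [zero_add, sub_zero] at this
    convert this using 2
    field_simp
  exact ge_of_tendsto' hlim hbound

/-- Corollary I : `(1/2) log (x+3/4) ≤ log Γ(x+3/2) - log Γ(x+1)`. -/
private lemma cor1 {x : ℝ} (hx : 0 < x) :
    (1/2) * Real.log (x+3/4) ≤
      Real.log (Real.Gamma (x+3/2)) - Real.log (Real.Gamma (x+1)) := by
  have h := gamma_ratio_lower (by linarith : (0:ℝ) < x+1/2)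
  rw [show x+1/2+1/4 = x+3/4 by ring, show x+1/2+1/2 = x+1 by ring,
    show x+1/2+1 = x+3/2 by ring] at h
  have hg1 := Real.Gamma_pos_of_pos (by linarith : (0:ℝ) < x+1)
  have hg2 := Real.Gamma_pos_of_pos (by linarith : (0:ℝ) < x+3/2)
  have hlog := Real.log_le_log (by positivity) h
  rw [Real.log_mul (by positivity) (by positivity), Real.log_pow, Real.log_pow] at hlog
  push_cast at hlog
  linarith

/-- Corollary II : `log Γ(x+5/2) - log Γ(x+2) ≤ (1/2) log (x+7/4) + 1/(32(x+7/4)²)`. -/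
private lemma cor2 {x : ℝ} (hx : 0 < x) :
    Real.log (Real.Gamma (x+5/2)) - Real.log (Real.Gamma (x+2)) ≤
      (1/2) * Real.log (x+7/4) + 1/(32*(x+7/4)^2) := by
  have h := Lf_le (by linarith : (0:ℝ) < x+3/2)
  rw [Lf, show x+3/2+1 = x+5/2 by ring, show x+3/2+1/2 = x+2 by ring,
    show x+3/2+1/4 = x+7/4 by ring] at h
  have hb7 : (x+7/4:ℝ) ≠ 0 := by positivity
  have e : 1/(16*(x+7/4)^2) = 2 * (1/(32*(x+7/4)^2)) := by field_simp; ring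
  rw [e] at h
  linarith

private lemma two_log_le {z : ℝ} (hz : 1 ≤ z) : 2 * Real.log z ≤ z - 1/z := by
  rcases eq_or_lt_of_le hz with h | h
  · rw [← h]; norm_num
  · have hv : 0 < Real.log z := Real.log_pos h
    have hs := Real.self_lt_sinh_iff.mpr hv
    rw [Real.sinh_eq, Real.exp_log (by linarith), Real.exp_neg, Real.exp_log (by linarith)] at hs
    have : 1/z = z⁻¹ := one_div z
    linarith [hs]

private lemma elem_ineq {x : ℝ} (hx : 0 < x) :
    Real.log (1+x) + (x+1/2) * Real.log (x+7/4) + 1/(16*(x+7/4))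
      ≤ 1 + (x+3/2) * Real.log (x+3/4) := by
  have ha : (0:ℝ) < x+3/4 := by linarith
  have hb : (0:ℝ) < x+7/4 := by linarith
  have h1x : (0:ℝ) < 1+x := by linarith
  set z : ℝ := (x+23/16)/(x+15/16) with hzdef
  have hz1 : (1:ℝ) ≤ z := by
    rw [hzdef, le_div_iff₀ (by linarith)]; linarith
  have hz0 : (0:ℝ) < z := by linarith
  have hk0 : (x+7/4)/(x+3/4) ≤ z^2 := by
    rw [hzdef, div_pow, div_le_div_iff₀ (by linarith) (by positivity)]
    nlinarith
  have key1 : Real.log (x+7/4) - Real.log (x+3/4) ≤ (x+19/16)/((x+15/16)*(x+23/16)) := by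
    have h1 : Real.log (x+7/4) - Real.log (x+3/4) = Real.log ((x+7/4)/(x+3/4)) :=
      (Real.log_div (ne_of_gt hb) (ne_of_gt ha)).symm
    have h2 : Real.log ((x+7/4)/(x+3/4)) ≤ Real.log (z^2) :=
      Real.log_le_log (by positivity) hk0
    have h3 : Real.log (z^2) = 2 * Real.log z := by
      rw [Real.log_pow]; push_cast; ring
    have h4 := two_log_le hz1
    have h5 : z - 1/z = (x+19/16)/((x+15/16)*(x+23/16)) := by
      rw [hzdef]; field_simp; ring
    linarith
  have key2 : (3/4) * (1/(x+7/4)) ≤ Real.log (x+7/4) - Real.log (1+x) := by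
    have h1 := Real.log_le_sub_one_of_pos (div_pos h1x hb)
    rw [Real.log_div (ne_of_gt h1x) (ne_of_gt hb)] at h1
    have h2 : (1+x)/(x+7/4) - 1 = -((3/4) * (1/(x+7/4))) := by field_simp; ring
    linarith
  have poly : ((x+3/2)*(x+19/16))/((x+15/16)*(x+23/16))
      ≤ ((x+7/4) + 11/16)/(x+7/4) := by
    rw [div_le_div_iff₀ (by positivity) hb]
    nlinarith
  have m1 : (x+3/2) * (Real.log (x+7/4) - Real.log (x+3/4))
      ≤ ((x+3/2)*(x+19/16))/((x+15/16)*(x+23/16)) := by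
    have := mul_le_mul_of_nonneg_left key1 (by linarith : (0:ℝ) ≤ x+3/2)
    calc (x+3/2) * (Real.log (x+7/4) - Real.log (x+3/4))
        ≤ (x+3/2) * ((x+19/16)/((x+15/16)*(x+23/16))) := this
      _ = ((x+3/2)*(x+19/16))/((x+15/16)*(x+23/16)) := by ring
  have e1 : ((x+7/4) + 11/16)/(x+7/4) = 1 + (11/16) * (1/(x+7/4)) := by
    field_simp
  have e2 : 1/(16*(x+7/4)) = (1/16) * (1/(x+7/4)) := by
    rw [one_div, one_div, mul_inv]; ring
  rw [e1] at poly
  rw [e2]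
  nlinarith [m1, key2, poly]

/-- main inequality in the variable `x = 2/(p-1)` -/
private lemma main_x {x : ℝ} (hx : 0 < x) :
    Real.exp (-1) ≤ 1/(1+x) * (Real.Gamma (2+x)/Real.Gamma (5/2+x)) ^ (1+2*x)
      * (Real.Gamma (3/2+x)/Real.Gamma (1+x)) ^ (3+2*x) := by
  have hg1 := Real.Gamma_pos_of_pos (by linarith : (0:ℝ) < 1+x)
  have hg2 := Real.Gamma_pos_of_pos (by linarith : (0:ℝ) < 2+x)
  have hg52 := Real.Gamma_pos_of_pos (by linarith : (0:ℝ) < 5/2+x)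
  have hg32 := Real.Gamma_pos_of_pos (by linarith : (0:ℝ) < 3/2+x)
  set A : ℝ := Real.Gamma (2+x)/Real.Gamma (5/2+x) with hAdef
  set B : ℝ := Real.Gamma (3/2+x)/Real.Gamma (1+x) with hBdef
  have hA : 0 < A := div_pos hg2 hg52
  have hB : 0 < B := div_pos hg32 hg1
  have hP : 0 < 1/(1+x) * A ^ (1+2*x) * B ^ (3+2*x) := by
    have := Real.rpow_pos_of_pos hA (1+2*x)
    have := Real.rpow_pos_of_pos hB (3+2*x)
    positivity
  rw [← Real.exp_log hP]
  apply Real.exp_le_exp.2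
  have hlogP : Real.log (1/(1+x) * A ^ (1+2*x) * B ^ (3+2*x))
      = -Real.log (1+x) + (1+2*x) * Real.log A + (3+2*x) * Real.log B := by
    rw [Real.log_mul (by positivity) (ne_of_gt (Real.rpow_pos_of_pos hB _)),
      Real.log_mul (by positivity) (ne_of_gt (Real.rpow_pos_of_pos hA _)),
      Real.log_rpow hA, Real.log_rpow hB, one_div, Real.log_inv]
    try ring
  rw [hlogP]
  -- bounds on log A and log B
  have hlogA : Real.log A = Real.log (Real.Gamma (2+x)) - Real.log (Real.Gamma (5/2+x)) :=
    Real.log_div (ne_of_gt hg2) (ne_of_gt hg52)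
  have hlogB : Real.log B = Real.log (Real.Gamma (3/2+x)) - Real.log (Real.Gamma (1+x)) :=
    Real.log_div (ne_of_gt hg32) (ne_of_gt hg1)
  have hc2 := cor2 hx
  rw [show x+5/2 = 5/2+x by ring, show x+2 = 2+x by ring] at hc2
  have hc1 := cor1 hx
  rw [show x+3/2 = 3/2+x by ring, show x+1 = 1+x by ring] at hc1
  -- multiply by the positive exponents
  have f1 : (1+2*x) * (Real.log (Real.Gamma (5/2+x)) - Real.log (Real.Gamma (2+x)))
      ≤ (1+2*x) * ((1/2) * Real.log (x+7/4) + 1/(32*(x+7/4)^2)) :=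
    mul_le_mul_of_nonneg_left hc2 (by linarith)
  have f2 : (3+2*x) * ((1/2) * Real.log (x+3/4))
      ≤ (3+2*x) * (Real.log (Real.Gamma (3/2+x)) - Real.log (Real.Gamma (1+x))) :=
    mul_le_mul_of_nonneg_left hc1 (by linarith)
  have f5 : (1+2*x) * (1/(32*(x+7/4)^2)) ≤ 1/(16*(x+7/4)) := by
    rw [show (1+2*x) * (1/(32*(x+7/4)^2)) = (1+2*x)/(32*(x+7/4)^2) by ring,
      div_le_div_iff₀ (by positivity) (by positivity)]
    nlinarith
  have helem := elem_ineq hx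
  rw [hlogA, hlogB]
  nlinarith [f1, f2, f5, helem]

end

theorem cP_ge (p : ℝ) (hp : 1 < p) :
    cP p ≥ 1 / (2 * Real.pi * Real.exp 1) := by
  have hp1 : (0:ℝ) < p - 1 := by linarith
  set x : ℝ := 2/(p-1) with hxdef
  have hx : 0 < x := by positivity
  have hne : p - 1 ≠ 0 := ne_of_gt hp1
  have hne2 : 2*p - 2 ≠ 0 := by intro h; apply hne; linarith
  have e1 : (p+1)/(p-1) = 1+x := by rw [hxdef]; field_simp; ring
  have e2 : 2*p/(p-1) = 2+x := by rw [hxdef]; field_simp; ring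
  have e3 : (5*p-1)/(2*p-2) = 5/2+x := by rw [hxdef]; field_simp; ring
  have e4 : (3*p+1)/(2*p-2) = 3/2+x := by rw [hxdef]; field_simp; ring
  have e5 : (p+3)/(p-1) = 1+2*x := by rw [hxdef]; field_simp; ring
  have e6 : (3*p+1)/(p-1) = 3+2*x := by rw [hxdef]; field_simp; ring
  rw [cP, e1, e2, e3, e4, e5, e6]
  have hg1 := Real.Gamma_pos_of_pos (by linarith : (0:ℝ) < 1+x)
  have hG2 : Real.Gamma (2+x) = (1+x) * Real.Gamma (1+x) := by
    have := Real.Gamma_add_one (ne_of_gt (by linarith : (0:ℝ) < 1+x))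
    rw [show 1+x+1 = 2+x by ring] at this; exact this
  have hdiv : Real.Gamma (1+x) / Real.Gamma (2+x) = 1/(1+x) := by
    rw [hG2]; field_simp; try ring
  rw [hdiv]
  have hmain := main_x hx
  have hpi : (0:ℝ) < Real.pi := Real.pi_pos
  have hRHS : 1 / (2 * Real.pi * Real.exp 1) = (1/(2*Real.pi)) * Real.exp (-1) := by
    rw [Real.exp_neg]
    field_simp
  rw [hRHS, ge_iff_le,
    show (1/(2*Real.pi)) * (1/(1+x)) *
        (Real.Gamma (2+x)/Real.Gamma (5/2+x)) ^ (1+2*x) *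
        (Real.Gamma (3/2+x)/Real.Gamma (1+x)) ^ (3+2*x)
      = (1/(2*Real.pi)) * (1/(1+x) * (Real.Gamma (2+x)/Real.Gamma (5/2+x)) ^ (1+2*x)
        * (Real.Gamma (3/2+x)/Real.Gamma (1+x)) ^ (3+2*x)) by ring]
  exact mul_le_mul_of_nonneg_left hmain (by positivity)
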